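/- The population risk L_F is convex on L¹(F): for measurable θ₀, θ₁ with E_F|θ₀|, E_F|θ₁| < ∞ and λ ∈ [0,1], L_F((1−λ)θ₀ + λθ₁) ≤ (1−λ)L_F(θ₀) + λL_F(θ₁). Moreover, L_F is strictly convex on the centered class: if θ₀, θ₁ ∈ L²(F) both have E_F-mean zero and θ₀ ≠ θ₁ as elements of L²(F) (i.e., F{θ₀ ≠ θ₁} > 0), then L_F((θ₀+θ₁)/2) < (L_F(θ₀) + L_F(θ₁))/2. -/

import Mathlib

open MeasureTheory

/-- The logistic function `σ(t) = 1/(1+e^{-t})`. -/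
noncomputable def logistic (t : ℝ) : ℝ := 1 / (1 + Real.exp (-t))

/-- The pointwise cross-entropy loss `ℓ_p(t) = -p log σ(t) - (1-p) log σ(-t)`. -/
noncomputable def ceLoss (p t : ℝ) : ℝ :=
  -p * Real.log (logistic t) - (1 - p) * Real.log (logistic (-t))

/-- The preference probability `p_F(x,y) = P_{Z∼F}{δ(Z,x) > δ(Z,y)}`. -/
noncomputable def prefProb {X : Type*} [MeasurableSpace X] (F : Measure X)
    (δ : X → X → ℝ) (x y : X) : ℝ :=
  (F {z | δ z y < δ z x}).toReal

/-- The population cross-entropy risk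
`L_F(θ) = E_{X,Y i.i.d. ∼ F} [ℓ_{p_F(X,Y)}(θ(Y) - θ(X))]`. -/
noncomputable def popRisk {X : Type*} [MeasurableSpace X] (F : Measure X)
    (δ : X → X → ℝ) (θ : X → ℝ) : ℝ :=
  ∫ q, ceLoss (prefProb F δ q.1 q.2) (θ q.2 - θ q.1) ∂(F.prod F)


lemma ceLoss_eq (p t : ℝ) : ceLoss p t = Real.log (1 + Real.exp t) - p * t := by
  have h1 : (1:ℝ) + Real.exp (-t) = Real.exp (-t) * (1 + Real.exp t) := by
    rw [mul_add, mul_one, ← Real.exp_add, neg_add_cancel, Real.exp_zero, add_comm]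
  have hpos : (0:ℝ) < 1 + Real.exp t := by positivity
  have hpos' : (0:ℝ) < 1 + Real.exp (-t) := by positivity
  unfold ceLoss logistic
  rw [neg_neg, Real.log_div one_ne_zero (ne_of_gt hpos'),
    Real.log_div one_ne_zero (ne_of_gt hpos), Real.log_one, h1,
    Real.log_mul (Real.exp_ne_zero _) (ne_of_gt hpos), Real.log_exp]
  ring

lemma hasDerivAt_L (t : ℝ) :
    HasDerivAt (fun t => Real.log (1 + Real.exp t)) (Real.exp t / (1 + Real.exp t)) t :=
  ((Real.hasDerivAt_exp t).const_add 1).log (by positivity)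

lemma strictConvexOn_L : StrictConvexOn ℝ Set.univ (fun t => Real.log (1 + Real.exp t)) := by
  have hd : deriv (fun t => Real.log (1 + Real.exp t)) = fun t => Real.exp t / (1 + Real.exp t) :=
    funext fun t => (hasDerivAt_L t).deriv
  apply strictConvexOn_univ_of_deriv2_pos
  · exact (continuous_const.add Real.continuous_exp).log (fun t => (by positivity : (1:ℝ) + Real.exp t ≠ 0))
  · intro x
    have h2 : HasDerivAt (fun t => Real.exp t / (1 + Real.exp t))
        (Real.exp x / (1 + Real.exp x) ^ 2) x := by
      have hpos : (0:ℝ) < 1 + Real.exp x := by positivity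
      have := (Real.hasDerivAt_exp x).div ((Real.hasDerivAt_exp x).const_add 1) (ne_of_gt hpos)
      exact this.congr_deriv (by ring)
    have : deriv^[2] (fun t => Real.log (1 + Real.exp t)) x
        = Real.exp x / (1 + Real.exp x) ^ 2 := by
      simp only [Function.iterate_succ, Function.iterate_zero, Function.comp_apply, id_eq]
      rw [hd, h2.deriv]
    rw [this]
    positivity

lemma strictConvexOn_ceLoss (p : ℝ) : StrictConvexOn ℝ Set.univ (ceLoss p) := by
  have h : ceLoss p = fun t => Real.log (1 + Real.exp t) + (-p) * t :=
    funext fun t => by rw [ceLoss_eq]; ring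
  rw [h]
  exact strictConvexOn_L.add_convexOn
    ⟨convex_univ, fun x _ y _ a b _ _ _ => le_of_eq (by simp [smul_eq_mul]; ring)⟩

lemma ceLoss_abs_le {p : ℝ} (hp0 : 0 ≤ p) (hp1 : p ≤ 1) (t : ℝ) :
    |ceLoss p t| ≤ Real.log 2 + 2 * |t| := by
  rw [ceLoss_eq]
  have hL0 : 0 ≤ Real.log (1 + Real.exp t) :=
    Real.log_nonneg (by linarith [Real.exp_pos t])
  have hL : Real.log (1 + Real.exp t) ≤ Real.log 2 + |t| := by
    have h1 : Real.exp t ≤ Real.exp |t| := Real.exp_le_exp.2 (le_abs_self t)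
    have h2 : (1:ℝ) ≤ Real.exp |t| := Real.one_le_exp (abs_nonneg t)
    calc Real.log (1 + Real.exp t) ≤ Real.log (2 * Real.exp |t|) :=
          Real.log_le_log (by positivity) (by linarith)
      _ = Real.log 2 + |t| := by
          rw [Real.log_mul two_ne_zero (Real.exp_ne_zero _), Real.log_exp]
  have hpt : |p * t| ≤ |t| := by
    rw [abs_mul, abs_of_nonneg hp0]
    nlinarith [abs_nonneg t]
  calc |Real.log (1 + Real.exp t) - p * t|
      ≤ |Real.log (1 + Real.exp t)| + |p * t| := abs_sub _ _
    _ ≤ (Real.log 2 + |t|) + |t| := by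
        rw [abs_of_nonneg hL0]; linarith
    _ = Real.log 2 + 2 * |t| := by ring

section Aux
variable {X : Type*} [MeasurableSpace X] (F : Measure X) [IsProbabilityMeasure F]
  (δ : X → X → ℝ)

set_option linter.unusedSectionVars false

lemma measurable_prefProb (hδ : Measurable fun q : X × X => δ q.1 q.2) : Measurable (fun q : X × X => prefProb F δ q.1 q.2) := by
  have hs : MeasurableSet {r : (X × X) × X | δ r.2 r.1.2 < δ r.2 r.1.1} := by
    apply measurableSet_lt
    · exact hδ.comp (measurable_snd.prodMk measurable_fst.snd)
    · exact hδ.comp (measurable_snd.prodMk measurable_fst.fst)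
  exact (measurable_measure_prodMk_left (ν := F) hs).ennreal_toReal

lemma prefProb_nonneg (x y : X) : 0 ≤ prefProb F δ x y := ENNReal.toReal_nonneg

lemma prefProb_le_one (x y : X) : prefProb F δ x y ≤ 1 := by
  have h := prob_le_one (μ := F) (s := {z | δ z y < δ z x})
  simpa [prefProb] using ENNReal.toReal_mono ENNReal.one_ne_top h

lemma integrand_measurable (hδ : Measurable fun q : X × X => δ q.1 q.2) {θ : X → ℝ} (hθ : Measurable θ) :
    Measurable (fun q : X × X => ceLoss (prefProb F δ q.1 q.2) (θ q.2 - θ q.1)) := by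
  have hT : Measurable (fun q : X × X => θ q.2 - θ q.1) :=
    (hθ.comp measurable_snd).sub (hθ.comp measurable_fst)
  have : (fun q : X × X => ceLoss (prefProb F δ q.1 q.2) (θ q.2 - θ q.1))
      = fun q => Real.log (1 + Real.exp (θ q.2 - θ q.1))
          - prefProb F δ q.1 q.2 * (θ q.2 - θ q.1) :=
    funext fun q => ceLoss_eq _ _
  rw [this]
  exact ((Real.measurable_log.comp (measurable_const.add (Real.measurable_exp.comp hT)))).sub
    ((measurable_prefProb F δ hδ).mul hT)

lemma integrand_integrable (hδ : Measurable fun q : X × X => δ q.1 q.2) {θ : X → ℝ} (hθ : Measurable θ) (hθi : Integrable θ F) :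
    Integrable (fun q : X × X => ceLoss (prefProb F δ q.1 q.2) (θ q.2 - θ q.1)) (F.prod F) := by
  have h1 : Integrable (fun q : X × X => (2 * |θ q.1|) * 1) (F.prod F) :=
    (hθi.abs.const_mul 2).mul_prod (integrable_const 1)
  have h2 : Integrable (fun q : X × X => (1:ℝ) * (2 * |θ q.2|)) (F.prod F) :=
    (integrable_const 1).mul_prod (hθi.abs.const_mul 2)
  refine Integrable.mono' (((integrable_const (Real.log 2)).add h1).add h2)
    (integrand_measurable F δ hδ hθ).aestronglyMeasurable ?_
  refine Filter.Eventually.of_forall fun q => ?_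
  have hb := ceLoss_abs_le (prefProb_nonneg F δ q.1 q.2) (prefProb_le_one F δ q.1 q.2)
    (θ q.2 - θ q.1)
  have habs : |θ q.2 - θ q.1| ≤ |θ q.1| + |θ q.2| := by
    calc |θ q.2 - θ q.1| ≤ |θ q.2| + |θ q.1| := abs_sub _ _
      _ = |θ q.1| + |θ q.2| := add_comm _ _
  simp only [Real.norm_eq_abs]
  calc |ceLoss (prefProb F δ q.1 q.2) (θ q.2 - θ q.1)|
      ≤ Real.log 2 + 2 * |θ q.2 - θ q.1| := hb
    _ ≤ Real.log 2 + (2 * |θ q.1|) * 1 + 1 * (2 * |θ q.2|) := by linarith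

end Aux

/-- the population risk `L_F` is convex on `L¹(F)`, and strictly convex
on the class of mean-zero functions in `L²(F)`. -/
theorem popRisk_convex_and_strictly_convex {X : Type*} [MeasurableSpace X]
    (F : Measure X) [IsProbabilityMeasure F]
    (δ : X → X → ℝ) (hδ : Measurable fun q : X × X => δ q.1 q.2) :
    (∀ θ₀ θ₁ : X → ℝ, Measurable θ₀ → Measurable θ₁ →
      Integrable θ₀ F → Integrable θ₁ F →
      ∀ l ∈ Set.Icc (0 : ℝ) 1,
        popRisk F δ (fun x => (1 - l) * θ₀ x + l * θ₁ x)
          ≤ (1 - l) * popRisk F δ θ₀ + l * popRisk F δ θ₁) ∧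
    (∀ θ₀ θ₁ : X → ℝ, Measurable θ₀ → Measurable θ₁ →
      MemLp θ₀ 2 F → MemLp θ₁ 2 F →
      (∫ x, θ₀ x ∂F) = 0 → (∫ x, θ₁ x ∂F) = 0 →
      0 < F {x | θ₀ x ≠ θ₁ x} →
      popRisk F δ (fun x => (θ₀ x + θ₁ x) / 2)
        < (popRisk F δ θ₀ + popRisk F δ θ₁) / 2) := by
  constructor
  · intro θ₀ θ₁ hm0 hm1 hi0 hi1 l hl
    obtain ⟨hl0, hl1⟩ := hl
    set θl := fun x => (1 - l) * θ₀ x + l * θ₁ x with hθl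
    have hml : Measurable θl := (hm0.const_mul _).add (hm1.const_mul _)
    have hil : Integrable θl F := (hi0.const_mul _).add (hi1.const_mul _)
    have hI0 := integrand_integrable F δ hδ hm0 hi0
    have hI1 := integrand_integrable F δ hδ hm1 hi1
    have hIl := integrand_integrable F δ hδ hml hil
    have key : ∀ q : X × X,
        ceLoss (prefProb F δ q.1 q.2) (θl q.2 - θl q.1)
          ≤ (1 - l) * ceLoss (prefProb F δ q.1 q.2) (θ₀ q.2 - θ₀ q.1)
            + l * ceLoss (prefProb F δ q.1 q.2) (θ₁ q.2 - θ₁ q.1) := by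
      intro q
      have hc := (strictConvexOn_ceLoss (prefProb F δ q.1 q.2)).convexOn.2
        (Set.mem_univ (θ₀ q.2 - θ₀ q.1)) (Set.mem_univ (θ₁ q.2 - θ₁ q.1))
        (by linarith : (0:ℝ) ≤ 1 - l) hl0 (by ring)
      have harg : θl q.2 - θl q.1
          = (1 - l) • (θ₀ q.2 - θ₀ q.1) + l • (θ₁ q.2 - θ₁ q.1) := by
        simp only [hθl, smul_eq_mul]; ring
      rw [harg]
      simpa [smul_eq_mul] using hc
    show popRisk F δ θl ≤ _
    unfold popRisk
    calc ∫ q, ceLoss (prefProb F δ q.1 q.2) (θl q.2 - θl q.1) ∂(F.prod F)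
        ≤ ∫ q, ((1 - l) * ceLoss (prefProb F δ q.1 q.2) (θ₀ q.2 - θ₀ q.1)
            + l * ceLoss (prefProb F δ q.1 q.2) (θ₁ q.2 - θ₁ q.1)) ∂(F.prod F) :=
          integral_mono hIl ((hI0.const_mul _).add (hI1.const_mul _)) key
      _ = _ := by
          rw [integral_add (hI0.const_mul _) (hI1.const_mul _),
            integral_const_mul, integral_const_mul]
  · intro θ₀ θ₁ hm0 hm1 hL0 hL1 hmean0 hmean1 hne
    have hi0 : Integrable θ₀ F := hL0.integrable (by norm_num)
    have hi1 : Integrable θ₁ F := hL1.integrable (by norm_num)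
    set θm := fun x => (θ₀ x + θ₁ x) / 2 with hθm
    have hmm : Measurable θm := (hm0.add hm1).div_const 2
    have him : Integrable θm F := (hi0.add hi1).div_const 2
    have hIf := integrand_integrable F δ hδ hmm him
    have hI0 := integrand_integrable F δ hδ hm0 hi0
    have hI1 := integrand_integrable F δ hδ hm1 hi1
    set f := fun q : X × X => ceLoss (prefProb F δ q.1 q.2) (θm q.2 - θm q.1) with hfdef
    set g := fun q : X × X => (ceLoss (prefProb F δ q.1 q.2) (θ₀ q.2 - θ₀ q.1)
      + ceLoss (prefProb F δ q.1 q.2) (θ₁ q.2 - θ₁ q.1)) / 2 with hgdef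
    have hIg : Integrable g (F.prod F) := (hI0.add hI1).div_const 2
    have harg : ∀ q : X × X, θm q.2 - θm q.1
        = (1/2 : ℝ) • (θ₀ q.2 - θ₀ q.1) + (1/2 : ℝ) • (θ₁ q.2 - θ₁ q.1) := by
      intro q; simp only [hθm, smul_eq_mul]; ring
    have hle : ∀ q, f q ≤ g q := by
      intro q
      have hc := (strictConvexOn_ceLoss (prefProb F δ q.1 q.2)).convexOn.2
        (Set.mem_univ (θ₀ q.2 - θ₀ q.1)) (Set.mem_univ (θ₁ q.2 - θ₁ q.1))
        (by norm_num : (0:ℝ) ≤ 1/2) (by norm_num : (0:ℝ) ≤ 1/2) (by norm_num)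
      simp only [hfdef, hgdef, harg q]
      simp only [smul_eq_mul] at hc ⊢
      linarith
    -- positive measure of the strict set
    set d := fun x => θ₁ x - θ₀ x with hd
    set S := {q : X × X | d q.2 ≠ d q.1} with hS
    have hSmeas : 0 < (F.prod F) S := by
      by_contra hcon
      have hS0 : (F.prod F) S = 0 := by
        have := not_lt.1 hcon
        exact le_antisymm this (zero_le)
      have hae : ∀ᵐ q ∂(F.prod F), d q.2 = d q.1 := by
        rw [ae_iff]; exact hS0
      haveI : (ae F).NeBot := ae_neBot.2 (IsProbabilityMeasure.ne_zero (μ := F))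
      obtain ⟨x₀, hx₀⟩ := (Measure.ae_ae_of_ae_prod hae).exists
      have hdint : Integrable d F := hi1.sub hi0
      have hval : ∫ y, d y ∂F = d x₀ := by
        rw [integral_congr_ae (g := fun _ => d x₀) hx₀]
        simp
      have hzero : ∫ y, d y ∂F = 0 := by
        show ∫ y, (θ₁ y - θ₀ y) ∂F = 0
        rw [integral_sub hi1 hi0, hmean1, hmean0, sub_zero]
      have hx0 : d x₀ = 0 := by rw [← hval, hzero]
      have haeeq : ∀ᵐ y ∂F, θ₀ y = θ₁ y := by
        filter_upwards [hx₀] with y hy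
        have : d y = 0 := by rw [hy, hx0]
        simp only [hd] at this
        linarith
      have : F {x | θ₀ x ≠ θ₁ x} = 0 := by
        rw [show {x | θ₀ x ≠ θ₁ x} = {x | ¬ θ₀ x = θ₁ x} from rfl, ← ae_iff]
        exact haeeq
      exact absurd this hne.ne'
    have hpos : 0 < ∫ q, (g q - f q) ∂(F.prod F) := by
      rw [integral_pos_iff_support_of_nonneg
        (fun q => sub_nonneg.2 (hle q)) (hIg.sub hIf)]
      refine lt_of_lt_of_le hSmeas (measure_mono ?_)
      intro q hq
      have hne' : θ₀ q.2 - θ₀ q.1 ≠ θ₁ q.2 - θ₁ q.1 := by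
        intro h
        apply hq
        simp only [hd]
        linarith
      have hc := (strictConvexOn_ceLoss (prefProb F δ q.1 q.2)).2
        (Set.mem_univ (θ₀ q.2 - θ₀ q.1)) (Set.mem_univ (θ₁ q.2 - θ₁ q.1)) hne'
        (by norm_num : (0:ℝ) < 1/2) (by norm_num : (0:ℝ) < 1/2) (by norm_num)
      have hlt : f q < g q := by
        simp only [hfdef, hgdef, harg q]
        simp only [smul_eq_mul] at hc ⊢
        linarith
      exact sub_ne_zero.2 hlt.ne'
    rw [integral_sub hIg hIf] at hpos
    have hgint : ∫ q, g q ∂(F.prod F)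
        = (popRisk F δ θ₀ + popRisk F δ θ₁) / 2 := by
      simp only [hgdef, popRisk]
      rw [integral_div, integral_add hI0 hI1]
    have h1 : popRisk F δ θm = ∫ q, f q ∂(F.prod F) := rfl
    rw [h1, ← hgint]
    linarith
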